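/- Let x ∈ ℝ³ be a unit vector, F ∈ ℝ^{3×2} a matrix with FᵀF = I₂ and Fᵀx = 0, and Σ̂ ∈ ℝ^{3×3} symmetric positive definite. Then det(FᵀΣ̂F) = det(Σ̂) · (xᵀΣ̂⁻¹x). -/
import Mathlib

open Matrix

/-- If `x ∈ ℝ³` is a unit vector, `F ∈ ℝ^{3×2}` has orthonormal columns
orthogonal to `x`, and `Σ̂` is symmetric positive definite, then
`det(FᵀΣ̂F) = det(Σ̂)·(xᵀΣ̂⁻¹x)`. -/
theorem stmt_18 (x : Fin 3 → ℝ) (hx : x ⬝ᵥ x = 1)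
    (F : Matrix (Fin 3) (Fin 2) ℝ) (hF : Fᵀ * F = 1) (hFx : Fᵀ.mulVec x = 0)
    (Shat : Matrix (Fin 3) (Fin 3) ℝ) (hShat : Shat.PosDef) :
    (Fᵀ * Shat * F).det = Shat.det * (x ⬝ᵥ Shat⁻¹.mulVec x) := by
  -- Q : columns F₀, F₁, x
  set Q : Matrix (Fin 3) (Fin 3) ℝ := Matrix.of fun i j => ![F i 0, F i 1, x i] j with hQ
  have hF00 := congrFun (congrFun hF 0) 0
  have hF01 := congrFun (congrFun hF 0) 1
  have hF10 := congrFun (congrFun hF 1) 0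
  have hF11 := congrFun (congrFun hF 1) 1
  have hFx0 := congrFun hFx 0
  have hFx1 := congrFun hFx 1
  simp [mul_apply, Fin.sum_univ_three, mulVec, dotProduct] at hF00 hF01 hF10 hF11 hFx0 hFx1
  simp [dotProduct, Fin.sum_univ_three] at hx
  have hQQ : Qᵀ * Q = 1 := by
    ext i j
    fin_cases i <;> fin_cases j <;>
      simp [hQ, mul_apply, Fin.sum_univ_three, Matrix.one_apply] <;> linarith
  have hQQ' : Q * Qᵀ = 1 := mul_eq_one_comm.mp hQQ
  have hSinv : Shat * Shat⁻¹ = 1 := mul_nonsing_inv _ (isUnit_iff_ne_zero.mpr hShat.det_pos.ne')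
  have hMinv : (Qᵀ * Shat * Q)⁻¹ = Qᵀ * Shat⁻¹ * Q := by
    apply inv_eq_right_inv
    calc Qᵀ * Shat * Q * (Qᵀ * Shat⁻¹ * Q)
        = Qᵀ * Shat * (Q * Qᵀ) * Shat⁻¹ * Q := by noncomm_ring
      _ = Qᵀ * (Shat * Shat⁻¹) * Q := by rw [hQQ']; noncomm_ring
      _ = Qᵀ * Q := by rw [hSinv]; noncomm_ring
      _ = 1 := hQQ
  have hdetQ : Q.det * Q.det = 1 := by
    have := congrArg Matrix.det hQQ
    simpa [det_transpose] using this
  have hdetM : (Qᵀ * Shat * Q).det = Shat.det := by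
    rw [det_mul, det_mul, det_transpose]
    calc Q.det * Shat.det * Q.det = Shat.det * (Q.det * Q.det) := by ring
      _ = Shat.det := by rw [hdetQ, mul_one]
  have hinv22 : (Qᵀ * Shat * Q)⁻¹ 2 2 = x ⬝ᵥ Shat⁻¹.mulVec x := by
    rw [hMinv]
    simp [hQ, mul_apply, Fin.sum_univ_three, mulVec, dotProduct]
    try ring
  have hadj : adjugate (Qᵀ * Shat * Q) 2 2 =
      (Qᵀ * Shat * Q) 0 0 * (Qᵀ * Shat * Q) 1 1 -
        (Qᵀ * Shat * Q) 0 1 * (Qᵀ * Shat * Q) 1 0 := by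
    rw [adjugate_fin_three]; simp
  have hinvdef : (Qᵀ * Shat * Q)⁻¹ 2 2 = (Shat.det)⁻¹ * adjugate (Qᵀ * Shat * Q) 2 2 := by
    rw [Matrix.inv_def, hdetM, Ring.inverse_eq_inv']
    simp
  have hdet2 : (Fᵀ * Shat * F).det =
      (Qᵀ * Shat * Q) 0 0 * (Qᵀ * Shat * Q) 1 1 -
        (Qᵀ * Shat * Q) 0 1 * (Qᵀ * Shat * Q) 1 0 := by
    rw [det_fin_two]
    simp [hQ, mul_apply, Fin.sum_univ_three, Fin.sum_univ_two]
    try ring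
  have hd : Shat.det ≠ 0 := hShat.det_pos.ne'
  rw [hdet2, ← hadj, ← hinv22, hinvdef, ← mul_assoc, mul_inv_cancel₀ hd, one_mul]
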